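/- Let T, d, D = d+1, r be positive integers with D·r = D + T, and let V'(a_1) be the (Dr) × (Dr) matrix over the polynomial ring ℚ[a_1, a_2, ..., a_r] whose rows are the coefficient vectors of (x + a_i)^{T+j} for 1 ≤ i ≤ r, 0 ≤ j ≤ d. Viewing f(a_1) = det(V') as a polynomial in a_1, the polynomial (a_1 − a_2)^{D²} divides f(a_1). -/

import Mathlib

open Polynomial Finset
lemma vpd_sum_range_card_le (s : Finset ℕ) : ∑ i ∈ range s.card, i ≤ ∑ x ∈ s, x := by
  generalize hn : s.card = N
  induction N generalizing s with
  | zero => simp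
  | succ n ih =>
    have hne : s.Nonempty := Finset.card_pos.mp (by omega)
    have hmem := s.max'_mem hne
    set m := s.max' hne with hm
    have hsub : s ⊆ range (m + 1) := fun x hx =>
      mem_range.mpr (by have := Finset.le_max' s x hx; omega)
    have hcard : n + 1 ≤ m + 1 := by
      calc n + 1 = s.card := hn.symm
        _ ≤ (range (m + 1)).card := Finset.card_le_card hsub
        _ = m + 1 := by simp
    have herase : (s.erase m).card = n := by
      rw [Finset.card_erase_of_mem hmem, hn]; omega
    have h1 := ih (s.erase m) herase
    have h2 : ∑ x ∈ s.erase m, x + m = ∑ x ∈ s, x := Finset.sum_erase_add s _ hmem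
    rw [Finset.sum_range_succ]
    omega

lemma vpd_sum_fin_le_of_injective {n : ℕ} (f : Fin n → ℕ) (hf : Function.Injective f) :
    ∑ i : Fin n, (i : ℕ) ≤ ∑ i, f i := by
  have himg : (Finset.univ.image f).card = n := by
    rw [Finset.card_image_of_injective _ hf, Finset.card_univ, Fintype.card_fin]
  have h1 : ∑ x ∈ Finset.univ.image f, x = ∑ i, f i :=
    Finset.sum_image (fun x _ y _ h => hf h)
  have h2 := vpd_sum_range_card_le (Finset.univ.image f)
  rw [himg, h1] at h2
  calc ∑ i : Fin n, (i : ℕ) = ∑ i ∈ range n, i := Fin.sum_univ_eq_sum_range (fun i => i) n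
    _ ≤ ∑ i, f i := h2

lemma vpd_counting (T D : ℕ) (hD0 : 0 < D) (hTD : D ≤ T) (κ : Fin D → ℕ)
    (hle : ∀ j : Fin D, κ j ≤ T + j)
    (hb : ∀ j : Fin D, (j : ℕ) < κ j)
    (hinj : Function.Injective (fun j : Fin D => T + (j : ℕ) - κ j)) :
    D ^ 2 ≤ ∑ j, κ j := by
  set e : Fin D → ℕ := fun j => T + (j : ℕ) - κ j with he
  have he_lt : ∀ j, e j < T := fun j => by
    have h1 := hb j; have h2 := hle j; have := j.2; simp only [he]; omega
  have hg_inj : Function.Injective (fun j => T - 1 - e j) := by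
    intro a b h
    have ha := he_lt a; have hb' := he_lt b
    simp only at h
    exact hinj (by simp only [← he] at *; omega)
  have h1 : ∑ i : Fin D, (i : ℕ) ≤ ∑ j, (T - 1 - e j) :=
    vpd_sum_fin_le_of_injective _ hg_inj
  have h2 : ∑ j, e j + ∑ j, (T - 1 - e j) = D * (T - 1) := by
    rw [← Finset.sum_add_distrib]
    have : ∀ j : Fin D, e j + (T - 1 - e j) = T - 1 := fun j => by
      have := he_lt j; omega
    simp [this, Finset.sum_const, Finset.card_univ]
  have h3 : ∑ j, κ j + ∑ j, e j = D * T + ∑ i : Fin D, (i : ℕ) := by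
    rw [← Finset.sum_add_distrib]
    have : ∀ j : Fin D, κ j + e j = T + (j : ℕ) := fun j => by
      have := hle j; simp only [he]; omega
    rw [Finset.sum_congr rfl (fun j _ => this j), Finset.sum_add_distrib]
    simp [Finset.sum_const, Finset.card_univ]
  have hmul1 : D * (T - 1) + D = D * T := by
    have hT1 : T - 1 + 1 = T := by omega
    calc D * (T - 1) + D = D * ((T - 1) + 1) := by ring
      _ = D * T := by rw [hT1]
  have hSj : (∑ i : Fin D, (i : ℕ)) * 2 = D * (D - 1) := by
    rw [Fin.sum_univ_eq_sum_range (fun i => i) D, Finset.sum_range_id_mul_two]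
  have hmul2 : D * (D - 1) + D = D * D := by
    have hD1 : D - 1 + 1 = D := by omega
    calc D * (D - 1) + D = D * ((D - 1) + 1) := by ring
      _ = D * D := by rw [hD1]
  have hsq : D ^ 2 = D * D := sq D
  omega

open Polynomial in
/-- (a_1 - a_2)^{D²} divides det(V'), where the rows of V' are the coefficient
vectors of (x + a_i)^{T+j}, over ℚ[a_1, ..., a_r]. -/
theorem vandermonde_power_divides_det (T d r D : ℕ) (hD : D = d + 1)
    (hDr : D * r = D + T) (hT : 0 < T) (hr : 2 ≤ r) :
    ((MvPolynomial.X (⟨0, by omega⟩ : Fin r) - MvPolynomial.X ⟨1, by omega⟩) ^ (D ^ 2)) ∣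
      Matrix.det (fun (row col : Fin r × Fin D) =>
        ((X + C (MvPolynomial.X row.1 : MvPolynomial (Fin r) ℚ)) ^ (T + (row.2 : ℕ))).coeff
          ((col.1 : ℕ) * D + (col.2 : ℕ))) := by
  classical
  have hD0 : 0 < D := by omega
  have hTD : D ≤ T := by
    have h2 : D * 2 ≤ D * r := Nat.mul_le_mul_left D hr
    omega
  set i0 : Fin r := ⟨0, by omega⟩ with hi0
  set i1 : Fin r := ⟨1, by omega⟩ with hi1
  set e : MvPolynomial (Fin r) ℚ := MvPolynomial.X i0 - MvPolynomial.X i1 with he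
  set b : MvPolynomial (Fin r) ℚ := MvPolynomial.X i1 with hbdef
  set M : (Fin r × Fin D) → (Fin r × Fin D) → MvPolynomial (Fin r) ℚ :=
    fun row col => Polynomial.coeff ((X + C (MvPolynomial.X row.1)) ^ (T + (row.2 : ℕ)))
      ((col.1 : ℕ) * D + (col.2 : ℕ)) with hMdef
  show e ^ (D ^ 2) ∣ Matrix.det M
  set vrow : ℕ → (Fin r × Fin D) → MvPolynomial (Fin r) ℚ :=
    fun m col => ((X + C b) ^ m).coeff ((col.1 : ℕ) * D + (col.2 : ℕ)) with hv
  set g : (Fin r × Fin D) → ℕ → ((Fin r × Fin D) → MvPolynomial (Fin r) ℚ) :=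
    fun p k =>
      if p.1 = i0 then
        (e ^ k * ((T + (p.2 : ℕ)).choose k : MvPolynomial (Fin r) ℚ)) • vrow (T + (p.2 : ℕ) - k)
      else if k = 0 then M p else 0 with hg
  -- Row decomposition
  have hrow : ∀ p, M p = ∑ k ∈ Finset.range (T + d + 1), g p k := by
    intro p
    by_cases hp : p.1 = i0
    · funext col
      rw [Finset.sum_apply]
      have hXp : MvPolynomial.X p.1 = e + b := by rw [hp, he]; ring
      have hbin : (X + C (MvPolynomial.X p.1)) ^ (T + (p.2 : ℕ)) =
          ∑ k ∈ Finset.range (T + (p.2 : ℕ) + 1),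
            C (e ^ k * ((T + (p.2 : ℕ)).choose k : MvPolynomial (Fin r) ℚ)) *
              (X + C b) ^ (T + (p.2 : ℕ) - k) := by
        rw [hXp, map_add]
        have h1 : X + (C e + C b) = C e + (X + C b) := by ring
        rw [h1, add_pow]
        refine Finset.sum_congr rfl fun k _ => ?_
        rw [map_mul, Polynomial.C_eq_natCast, ← C_pow]
        ring
      have hterm : ∀ k, g p k col =
          e ^ k * ((T + (p.2 : ℕ)).choose k : MvPolynomial (Fin r) ℚ) *
            ((X + C b) ^ (T + (p.2 : ℕ) - k)).coeff ((col.1 : ℕ) * D + (col.2 : ℕ)) := by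
        intro k
        simp [hg, hp, hv, smul_eq_mul]
      have hsub : Finset.range (T + (p.2 : ℕ) + 1) ⊆ Finset.range (T + d + 1) := by
        apply Finset.range_subset_range.mpr
        have := p.2.2
        omega
      calc M p col
          = ∑ k ∈ Finset.range (T + (p.2 : ℕ) + 1),
              e ^ k * ((T + (p.2 : ℕ)).choose k : MvPolynomial (Fin r) ℚ) *
                ((X + C b) ^ (T + (p.2 : ℕ) - k)).coeff ((col.1 : ℕ) * D + (col.2 : ℕ)) := by
            rw [hMdef]
            simp only [hbin, finset_sum_coeff, coeff_C_mul]
        _ = ∑ k ∈ Finset.range (T + d + 1),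
              e ^ k * ((T + (p.2 : ℕ)).choose k : MvPolynomial (Fin r) ℚ) *
                ((X + C b) ^ (T + (p.2 : ℕ) - k)).coeff ((col.1 : ℕ) * D + (col.2 : ℕ)) := by
            refine Finset.sum_subset hsub fun k _ hk => ?_
            have hk' : T + (p.2 : ℕ) < k := by
              have hnm : ¬ k < T + (p.2 : ℕ) + 1 := fun h => hk (Finset.mem_range.mpr h)
              omega
            simp [Nat.choose_eq_zero_of_lt hk']
        _ = ∑ k ∈ Finset.range (T + d + 1), g p k col :=
            Finset.sum_congr rfl fun k _ => by rw [hterm k]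
    · simp only [hg, if_neg hp]
      rw [Finset.sum_ite_eq' (Finset.range (T + d + 1)) 0 (fun _ => M p)]
      simp
  -- multilinear expansion of the determinant
  have hdet : Matrix.det M = ∑ κ ∈ Fintype.piFinset (fun _ : Fin r × Fin D => Finset.range (T + d + 1)),
      Matrix.detRowAlternating (fun p => g p (κ p)) := by
    have hM' : M = fun p => ∑ k ∈ Finset.range (T + d + 1), g p k := funext hrow
    rw [show Matrix.det M = Matrix.detRowAlternating M from rfl, hM']
    exact Matrix.detRowAlternating.toMultilinearMap.map_sum_finset g
      (fun _ => Finset.range (T + d + 1))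
  rw [hdet]
  refine Finset.dvd_sum fun κ hκ => ?_
  by_cases hzero : ∃ p : Fin r × Fin D, p.1 ≠ i0 ∧ κ p ≠ 0
  · obtain ⟨p, hp1, hp2⟩ := hzero
    have h0 : (fun q => g q (κ q)) p = 0 := by simp [hg, hp1, hp2]
    have h0' : Matrix.detRowAlternating (fun q => g q (κ q)) = 0 :=
      Matrix.detRowAlternating.toMultilinearMap.map_coord_zero p h0
    rw [h0']
    exact dvd_zero _
  push_neg at hzero
  set c : Fin r × Fin D → MvPolynomial (Fin r) ℚ := fun p =>
    if p.1 = i0 then e ^ (κ p) * ((T + (p.2 : ℕ)).choose (κ p) : MvPolynomial (Fin r) ℚ)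
    else 1 with hc
  set w : (Fin r × Fin D) → (Fin r × Fin D) → MvPolynomial (Fin r) ℚ := fun p =>
    if p.1 = i0 then vrow (T + (p.2 : ℕ) - κ p) else M p with hw
  have hgw : (fun p => g p (κ p)) = fun p => c p • w p := by
    funext p
    by_cases hp : p.1 = i0
    · simp [hg, hc, hw, hp]
    · simp [hg, hc, hw, hp, hzero p hp]
  have hterm : Matrix.detRowAlternating (fun p => g p (κ p)) =
      (∏ p, c p) • Matrix.detRowAlternating w := by
    rw [hgw]
    exact Matrix.detRowAlternating.toMultilinearMap.map_smul_univ c w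
  rw [hterm]
  by_cases hch : ∃ j : Fin D, T + (j : ℕ) < κ (i0, j)
  · obtain ⟨j, hj⟩ := hch
    have hc0 : c (i0, j) = 0 := by
      simp [hc, Nat.choose_eq_zero_of_lt hj]
    have hp0 : ∏ p, c p = 0 := Finset.prod_eq_zero (Finset.mem_univ (i0, j)) hc0
    rw [hp0, zero_smul]
    exact dvd_zero _
  push_neg at hch
  by_cases hs : D ^ 2 ≤ ∑ j : Fin D, κ (i0, j)
  · have hprod : ∏ p : Fin r × Fin D, c p = ∏ j : Fin D, c (i0, j) := by
      rw [Fintype.prod_prod_type]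
      refine Fintype.prod_eq_single i0 fun i hi => ?_
      exact Finset.prod_eq_one fun j _ => by simp [hc, hi]
    have hdvd : e ^ (D ^ 2) ∣ ∏ p : Fin r × Fin D, c p := by
      rw [hprod]
      have hsplit : ∏ j : Fin D, c (i0, j) =
          (e ^ (∑ j : Fin D, κ (i0, j))) *
            ∏ j : Fin D, ((T + (j : ℕ)).choose (κ (i0, j)) : MvPolynomial (Fin r) ℚ) := by
        rw [← Finset.prod_pow_eq_pow_sum, ← Finset.prod_mul_distrib]
        exact Finset.prod_congr rfl fun j _ => by simp [hc]
      rw [hsplit]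
      exact Dvd.dvd.mul_right (pow_dvd_pow e hs) _
    rw [smul_eq_mul]
    exact Dvd.dvd.mul_right hdvd _
  -- remaining case: two equal rows
  push_neg at hs
  have key : (∃ j : Fin D, κ (i0, j) ≤ (j : ℕ)) ∨
      (∃ j j' : Fin D, j ≠ j' ∧ T + (j : ℕ) - κ (i0, j) = T + (j' : ℕ) - κ (i0, j')) := by
    by_contra hcon
    push_neg at hcon
    obtain ⟨h1, h2⟩ := hcon
    have hinj : Function.Injective (fun j : Fin D => T + (j : ℕ) - κ (i0, j)) := by
      intro a b' hab
      by_contra hne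
      exact h2 a b' hne hab
    have hge := vpd_counting T D hD0 hTD (fun j => κ (i0, j)) (fun j => hch j)
      (fun j => h1 j) hinj
    exact absurd hge (not_le.mpr hs)
  have hwzero : Matrix.detRowAlternating w = 0 := by
    rcases key with ⟨j, hj⟩ | ⟨j, j', hne, heq⟩
    · set m : Fin D := ⟨(j : ℕ) - κ (i0, j), by have := j.2; omega⟩ with hm
      have heqrow : w (i0, j) = w (i1, m) := by
        have h1 : w (i0, j) = vrow (T + (j : ℕ) - κ (i0, j)) := by simp [hw]
        have hne10 : i1 ≠ i0 := by simp [hi0, hi1, Fin.ext_iff]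
        have h2 : w (i1, m) = vrow (T + (m : ℕ)) := by
          simp only [hw, if_neg hne10]; rfl
        have harg : T + (j : ℕ) - κ (i0, j) = T + (m : ℕ) := by
          have hmv : (m : ℕ) = (j : ℕ) - κ (i0, j) := rfl
          omega
        rw [h1, harg, h2]
      exact Matrix.detRowAlternating.map_eq_zero_of_eq w heqrow
        (by simp [Prod.ext_iff, hi0, hi1, Fin.ext_iff])
    · have heqrow : w (i0, j) = w (i0, j') := by
        simp only [hw, if_pos rfl]
        rw [heq]
      exact Matrix.detRowAlternating.map_eq_zero_of_eq w heqrow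
        (by simp [Prod.ext_iff, hne])
  rw [hwzero, smul_zero]
  exact dvd_zero _
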